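/- Let 0 < α ≤ 1, let à ∈ ℝ^{n×n} be symmetric, and let X ∈ ℝ^{n×d}. Assume the matrix I − (1−α)à is positive definite. Define g(F) = ‖F − X‖²_F + (1/α − 1) tr(Fᵀ(I − Ã)F). Then F* = α (I − (1−α)Ã)^{−1} X is the unique global minimizer of g: for all F ∈ ℝ^{n×d}, g(F*) ≤ g(F), with equality if and only if F = F*. (This is the exact-solution characterization of PPNP aggregation.) -/

import Mathlib

open Matrix

/-- PPNP exact-solution characterization: for `0 < α ≤ 1`, `Ã` symmetric with
`I − (1−α)Ã` positive definite, and `g(F) = ‖F − X‖²_F + (1/α − 1)tr(Fᵀ(I − Ã)F)`,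
the matrix `F* = α(I − (1−α)Ã)⁻¹X` is the unique global minimizer of `g`:
`g(F*) ≤ g(F)` for all `F`, with equality iff `F = F*`. -/
theorem ppnp_exact_minimizer (n d : ℕ) (α : ℝ) (hα1 : 0 < α) (hα2 : α ≤ 1)
    (Atil : Matrix (Fin n) (Fin n) ℝ) (hsym : Atil.IsSymm)
    (X : Matrix (Fin n) (Fin d) ℝ)
    (hpd : (1 - (1 - α) • Atil).PosDef) :
    let g : Matrix (Fin n) (Fin d) ℝ → ℝ := fun F =>
      (∑ i, ∑ j, (F i j - X i j) ^ 2)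
        + (1 / α - 1) * Matrix.trace (Fᵀ * (1 - Atil) * F)
    let Fstar : Matrix (Fin n) (Fin d) ℝ := α • ((1 - (1 - α) • Atil)⁻¹ * X)
    ∀ F : Matrix (Fin n) (Fin d) ℝ, g Fstar ≤ g F ∧ (g Fstar = g F ↔ F = Fstar) := by
  intro g Fstar
  set P : Matrix (Fin n) (Fin n) ℝ := 1 - (1 - α) • Atil with hPdef
  have hα : (α:ℝ) ≠ 0 := hα1.ne'
  have hPsym : Pᵀ = P := by
    simp [hPdef, Matrix.transpose_sub, Matrix.transpose_smul, hsym.eq]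
  have hinv : P * P⁻¹ = 1 :=
    Matrix.mul_nonsing_inv _ (isUnit_iff_ne_zero.2 hpd.det_pos.ne')
  have hPF : P * Fstar = α • X := by
    show P * (α • (P⁻¹ * X)) = α • X
    rw [Matrix.mul_smul, ← Matrix.mul_assoc, hinv, Matrix.one_mul]
  -- trace symmetry
  have hsymtr : ∀ A B : Matrix (Fin n) (Fin d) ℝ,
      trace (Aᵀ * P * B) = trace (Bᵀ * P * A) := by
    intro A B
    rw [← Matrix.trace_transpose (Aᵀ * P * B)]
    simp [Matrix.transpose_mul, hPsym, Matrix.mul_assoc]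
  have htrsym : ∀ A B : Matrix (Fin n) (Fin d) ℝ,
      trace (Aᵀ * B) = trace (Bᵀ * A) := by
    intro A B
    rw [← Matrix.trace_transpose (Aᵀ * B)]
    simp [Matrix.transpose_mul]
  have hsq : ∀ A : Matrix (Fin n) (Fin d) ℝ,
      (∑ i, ∑ j, (A i j)^2 : ℝ) = trace (Aᵀ * A) := by
    intro A
    rw [Matrix.trace]
    simp only [Matrix.diag, Matrix.mul_apply, Matrix.transpose_apply, sq]
    exact Finset.sum_comm
  -- master formula
  have hmaster : ∀ G : Matrix (Fin n) (Fin d) ℝ,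
      α * g G = trace (Gᵀ * P * G) - 2 * trace (Gᵀ * P * Fstar)
        + α * trace (Xᵀ * X) := by
    intro G
    have h1 : (∑ i, ∑ j, (G i j - X i j)^2 : ℝ) = trace ((G - X)ᵀ * (G - X)) := by
      have := hsq (G - X); simpa using this
    have hPexp : trace (Gᵀ * P * G)
        = trace (Gᵀ * G) - (1 - α) * trace (Gᵀ * Atil * G) := by
      simp [hPdef, Matrix.mul_sub, Matrix.sub_mul, Matrix.smul_mul, Matrix.mul_smul,
        Matrix.trace_sub, Matrix.trace_smul, smul_eq_mul, Matrix.mul_assoc]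
    have hPFtr : trace (Gᵀ * P * Fstar) = α * trace (Gᵀ * X) := by
      rw [Matrix.mul_assoc, hPF, Matrix.mul_smul, Matrix.trace_smul, smul_eq_mul]
    have hMexp : trace (Gᵀ * (1 - Atil) * G)
        = trace (Gᵀ * G) - trace (Gᵀ * Atil * G) := by
      simp [Matrix.mul_sub, Matrix.sub_mul, Matrix.trace_sub, Matrix.mul_assoc]
    have hsubexp : trace ((G - X)ᵀ * (G - X))
        = trace (Gᵀ * G) - 2 * trace (Gᵀ * X) + trace (Xᵀ * X) := by
      simp [Matrix.transpose_sub, Matrix.mul_sub, Matrix.sub_mul, Matrix.trace_sub,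
        htrsym X G]
      ring
    show α * ((∑ i, ∑ j, (G i j - X i j)^2) + (1/α - 1) * trace (Gᵀ * (1 - Atil) * G)) = _
    rw [h1, hsubexp, hMexp, hPexp, hPFtr]
    field_simp
    ring
  -- difference formula
  have hdiff : ∀ G : Matrix (Fin n) (Fin d) ℝ,
      α * g G - α * g Fstar = trace ((G - Fstar)ᵀ * P * (G - Fstar)) := by
    intro G
    have hexp : trace ((G - Fstar)ᵀ * P * (G - Fstar))
        = trace (Gᵀ * P * G) - 2 * trace (Gᵀ * P * Fstar)
          + trace (Fstarᵀ * P * Fstar) := by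
      simp [Matrix.transpose_sub, Matrix.mul_sub, Matrix.sub_mul, Matrix.trace_sub]
      have := hsymtr Fstar G
      ring_nf
      linarith
    rw [hmaster G, hmaster Fstar, hexp]
    ring
  -- positivity
  have hcol : ∀ D : Matrix (Fin n) (Fin d) ℝ,
      trace (Dᵀ * P * D) = ∑ j, (fun i => D i j) ⬝ᵥ (P *ᵥ (fun i => D i j)) := by
    intro D
    simp only [Matrix.trace, Matrix.diag, Matrix.mul_apply, Matrix.transpose_apply,
      dotProduct, Matrix.mulVec, Finset.mul_sum, Finset.sum_mul]
    congr 1; ext j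
    rw [Finset.sum_comm]
    congr 1; ext i
    congr 1; ext k
    ring
  have hterm_nonneg : ∀ (D : Matrix (Fin n) (Fin d) ℝ) (j : Fin d),
      0 ≤ (fun i => D i j) ⬝ᵥ (P *ᵥ (fun i => D i j)) := by
    intro D j
    have := hpd.posSemidef.dotProduct_mulVec_nonneg (fun i => D i j)
    simpa using this
  intro F
  set D : Matrix (Fin n) (Fin d) ℝ := F - Fstar with hD
  have htr_nonneg : 0 ≤ trace (Dᵀ * P * D) := by
    rw [hcol]
    exact Finset.sum_nonneg fun j _ => hterm_nonneg D j
  have hle : g Fstar ≤ g F := by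
    have := hdiff F
    nlinarith
  refine ⟨hle, ?_, ?_⟩
  · intro heq
    have htr0 : trace (Dᵀ * P * D) = 0 := by
      have := hdiff F; rw [← heq] at this; linarith
    have hzero : ∀ j, (fun i => D i j) ⬝ᵥ (P *ᵥ (fun i => D i j)) = 0 := by
      rw [hcol] at htr0
      intro j
      have := (Finset.sum_eq_zero_iff_of_nonneg
        (fun j _ => hterm_nonneg D j)).1 htr0 j (Finset.mem_univ j)
      exact this
    have hDzero : D = 0 := by
      ext i j
      by_contra hij
      have hvne : (fun i => D i j) ≠ 0 := by
        intro h
        exact hij (by simpa using congrFun h i)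
      have := hpd.dotProduct_mulVec_pos (x := fun i => D i j) hvne
      simp only [star_trivial] at this
      rw [hzero j] at this
      exact lt_irrefl 0 this
    exact sub_eq_zero.1 hDzero
  · intro heq
    rw [heq]
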